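/- (Tree replacement lemma) In Schelling's segregation model with Markovian contagion, let Y = (y, e₀) be a state of Ω_k whose coloring y is maximally segregated, let X = (x, e_r) be any state of Ω_k, and let T be a tree rooted at X (within Ω_k) of minimal resistance among all trees rooted at X. Then there exists a tree rooted at Y whose resistance is at most the resistance of T, and strictly less if the coloring x is not maximally segregated. -/

import Mathlib

open Classical Filter Finset

noncomputable section

namespace Schelling

variable {V : Type*} [Fintype V] [DecidableEq V]

/-- A coloring assigns `+1` or `-1` to each vertex. -/
def IsColoring (x : V → ℤ) : Prop := ∀ v, x v = 1 ∨ x v = -1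

/-- `wdeg G x i` : number of neighbors of `i` with the same color minus
the number of neighbors with the opposite color. -/
def wdeg (G : SimpleGraph V) (x : V → ℤ) (i : V) : ℤ :=
  ((univ.filter fun j => G.Adj i j ∧ x j = x i).card : ℤ)
    - ((univ.filter fun j => G.Adj i j ∧ x j ≠ x i).card : ℤ)

/-- Utility of agent `i`. -/
def util (G : SimpleGraph V) (r : ℝ) (εc : V → ℝ) (x : V → ℤ) (i : V) : ℝ :=
  r * (wdeg G x i : ℝ) + εc i

/-- The potential `L`. -/
def potential (G : SimpleGraph V) (r : ℝ) (εc : V → ℝ) (x : V → ℤ) : ℝ :=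
  ∑ i, util G r εc x i

/-- Number of bichromatic edges. -/
def bichromCount (G : SimpleGraph V) (x : V → ℤ) : ℕ :=
  (G.edgeFinset.filter fun e =>
    Sym2.lift ⟨fun u v => x u ≠ x v, fun u v => by simp [ne_comm]⟩ e).card

/-- Number of monochromatic edges. -/
def monoCount (G : SimpleGraph V) (x : V → ℤ) : ℕ :=
  (G.edgeFinset.filter fun e =>
    Sym2.lift ⟨fun u v => x u = x v, fun u v => by simp [eq_comm]⟩ e).card

/-- Number of vertices colored `+1`. -/
def plusCount (x : V → ℤ) : ℕ := (univ.filter fun v => x v = 1).card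

/-- A coloring is maximally segregated if it minimizes the number of bichromatic
edges among all colorings with the same number of `+1` vertices. -/
def MaximallySegregated (G : SimpleGraph V) (x : V → ℤ) : Prop :=
  ∀ x' : V → ℤ, IsColoring x' → plusCount x' = plusCount x →
    bichromCount G x ≤ bichromCount G x'

/-- Exchange the values of a coloring at `i` and `j`. -/
def swap (x : V → ℤ) (i j : V) : V → ℤ :=
  fun v => if v = i then x j else if v = j then x i else x v

/-- The resistance of activating pair `e' = (i,j)` in state `x` with outcome `x'`. -/
def resist (G : SimpleGraph V) (r : ℝ) (εc : V → ℝ)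
    (x : V → ℤ) (e' : V × V) (x' : V → ℤ) : ℝ :=
  let y := swap x e'.1 e'.2
  let a := util G r εc x e'.1 + util G r εc x e'.2
  let b := util G r εc y e'.1 + util G r εc y e'.2
  if x' = x then max 0 (b - a) else max 0 (a - b)

/-- The `N × N` torus. -/
def torus (N : ℕ) : SimpleGraph (ZMod N × ZMod N) where
  Adj u v := u ≠ v ∧
    ((u.1 = v.1 ∧ (u.2 = v.2 + 1 ∨ v.2 = u.2 + 1)) ∨
     (u.2 = v.2 ∧ (u.1 = v.1 + 1 ∨ v.1 = u.1 + 1)))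
  symm := by
    constructor
    rintro u v ⟨hne, h⟩
    refine ⟨hne.symm, ?_⟩
    rcases h with ⟨h1, h2⟩ | ⟨h1, h2⟩
    · exact Or.inl ⟨h1.symm, h2.symm⟩
    · exact Or.inr ⟨h1.symm, h2.symm⟩
  loopless := ⟨fun v h => h.1 rfl⟩

/-- Markovian contagion scheduler. -/
def IsScheduler {W : Type*} [Fintype W] (D : (W × W) → (W × W) → ℝ) : Prop :=
  (∀ e e', 0 ≤ D e e') ∧ (∀ e, ∑ e', D e e' = 1) ∧ (∀ e, 0 < D e e) ∧
  (∀ e e', 0 < D e e' ↔ 0 < D e' e) ∧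
  (∀ e e', Relation.ReflTransGen (fun a b => 0 < D a b) e e')

/-- One step transition probability of the chain `M_β`. -/
def kernel (G : SimpleGraph V) (r : ℝ) (εc : V → ℝ)
    (D : (V × V) → (V × V) → ℝ) (β : ℝ) :
    ((V → ℤ) × (V × V)) → ((V → ℤ) × (V × V)) → ℝ :=
  fun s t =>
    let x := s.1; let x' := t.1; let e' := t.2
    let y := swap x e'.1 e'.2
    let a := util G r εc x e'.1 + util G r εc x e'.2
    let b := util G r εc y e'.1 + util G r εc y e'.2
    D s.2 e' *
      ((if x' = y then Real.exp (β * b) / (Real.exp (β * a) + Real.exp (β * b)) else 0)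
       + (if x' = x then Real.exp (β * a) / (Real.exp (β * a) + Real.exp (β * b)) else 0))

/-- The finite set of all ±1 colorings of `V`. -/
def colorings (V : Type*) [Fintype V] [DecidableEq V] : Finset (V → ℤ) :=
  Fintype.piFinset fun _ => ({1, -1} : Finset ℤ)

/-- The set `Ω_k` of states whose coloring has exactly `k` vertices colored `+1`. -/
def Omega (V : Type*) [Fintype V] [DecidableEq V] (k : ℕ) :
    Finset ((V → ℤ) × (V × V)) :=
  ((colorings V).filter fun x => plusCount x = k) ×ˢ (univ : Finset (V × V))

/-- `n`-step transition probabilities of a kernel restricted to a finite set `S` of states. -/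
def kerpow {S : Type*} [DecidableEq S] (K : S → S → ℝ) (A : Finset S) : ℕ → S → S → ℝ
  | 0 => fun s t => if s = t then 1 else 0
  | n + 1 => fun s t => ∑ u ∈ A, kerpow K A n s u * K u t

/-- An admissible transition of the segregation chain. -/
def Adm (D : (V × V) → (V × V) → ℝ)
    (s t : (V → ℤ) × (V × V)) : Prop :=
  0 < D s.2 t.2 ∧ (t.1 = s.1 ∨ t.1 = swap s.1 t.2.1 t.2.2)

/-- Resistance of a transition between states of the chain. -/
def tres (G : SimpleGraph V) (r : ℝ) (εc : V → ℝ)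
    (s t : (V → ℤ) × (V × V)) : ℝ :=
  resist G r εc s.1 t.2 t.1

/-- `pathOK T a z l` : `l` is the list of successive vertices of a directed path
from `a` to `z` using transitions from `T`. -/
def pathOK {S : Type*} (T : Set (S × S)) (a z : S) : List S → Prop
  | [] => a = z
  | b :: l => (a, b) ∈ T ∧ pathOK T b z l

/-- `T` is a tree (within the state set `A`) rooted at `z`. -/
def IsTreeRootedAt {S : Type*} (Adm : S → S → Prop) (A : Finset S)
    (T : Finset (S × S)) (z : S) : Prop :=
  (∀ p ∈ T, p.1 ∈ A ∧ p.2 ∈ A ∧ Adm p.1 p.2) ∧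
  (∀ w ∈ A, w ≠ z → ∃! l : List S, pathOK (↑T : Set (S × S)) w z l)

/-- Resistance of a set of transitions. -/
def treeRes {S : Type*} (ρ : S → S → ℝ) (T : Finset (S × S)) : ℝ :=
  ∑ p ∈ T, ρ p.1 p.2

/-! ### Generic tree machinery -/

section Trees

variable {S : Type*} [DecidableEq S] {Ad : S → S → Prop} {A : Finset S}
  {T : Finset (S × S)} {z : S}

lemma pathOK_nil {T : Set (S × S)} {a z : S} : pathOK T a z ([] : List S) ↔ a = z :=
  Iff.rfl

lemma pathOK_cons {T : Set (S × S)} {a z b : S} {l : List S} :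
    pathOK T a z (b :: l) ↔ (a, b) ∈ T ∧ pathOK T b z l := Iff.rfl

lemma pathOK_append {T : Set (S × S)} {a z z' : S} {l l' : List S}
    (h : pathOK T a z l) (h' : pathOK T z z' l') : pathOK T a z' (l ++ l') := by
  induction l generalizing a with
  | nil =>
      have ha : a = z := h
      simpa [ha] using h'
  | cons b t ih => exact ⟨h.1, ih h.2⟩

/-- Extraction of the parent ("out-edge") map of a tree rooted at `z`. -/
lemma tree_out (hT : IsTreeRootedAt Ad A T z) (w₀ : S) (hw₀A : w₀ ∈ A) (hw₀ : w₀ ≠ z) :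
    ∃ f : S → S, ∃ rank : S → ℕ,
      (∀ v ∈ A, v ≠ z → (v, f v) ∈ T) ∧
      (∀ p ∈ T, p.1 ≠ z ∧ p.2 = f p.1) ∧
      (T = (A.erase z).image (fun v => (v, f v))) ∧
      (∀ v ∈ A, v ≠ z →
        f v ∈ A ∧ Ad v (f v) ∧ (f v = z ∨ (f v ≠ z ∧ rank (f v) < rank v))) := by
  classical
  haveI : Inhabited S := ⟨z⟩
  have key : ∀ v, v ∈ A ∧ v ≠ z → ∃! l : List S, pathOK (↑T : Set (S × S)) v z l :=
    fun v h => hT.2 v h.1 h.2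
  set pl : S → List S := fun v => if h : v ∈ A ∧ v ≠ z then (key v h).choose else []
    with hpl_def
  have hpl : ∀ v (h : v ∈ A ∧ v ≠ z), pathOK (↑T : Set (S × S)) v z (pl v) := by
    intro v h
    simp only [hpl_def, dif_pos h]
    exact (key v h).choose_spec.1
  have hplu : ∀ v (h : v ∈ A ∧ v ≠ z) (l : List S),
      pathOK (↑T : Set (S × S)) v z l → l = pl v := by
    intro v h l hl
    simp only [hpl_def, dif_pos h]
    exact (key v h).choose_spec.2 l hl
  have hplne : ∀ v (h : v ∈ A ∧ v ≠ z), pl v ≠ [] := by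
    intro v h hnil
    have := hpl v h
    rw [hnil] at this
    exact h.2 this
  set f : S → S := fun v => (pl v).headI with hf_def
  set rank : S → ℕ := fun v => (pl v).length with hrank_def
  -- shape of the chosen path
  have hshape : ∀ v (h : v ∈ A ∧ v ≠ z), ∃ l', pl v = f v :: l' ∧
      ((v, f v) ∈ T ∧ pathOK (↑T : Set (S × S)) (f v) z l') := by
    intro v h
    cases hc : pl v with
    | nil => exact absurd hc (hplne v h)
    | cons b l' =>
        have hp := hpl v h
        rw [hc] at hp
        have hb : f v = b := by simp [hf_def, hc]
        rw [hb]
        exact ⟨l', rfl, hp.1, hp.2⟩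
  -- the root has no outgoing edge
  have hroot : ∀ b, (z, b) ∈ T → False := by
    intro b hb
    have hbA : b ∈ A := (hT.1 _ hb).2.1
    have hcyc : ∃ l', pathOK (↑T : Set (S × S)) z z (b :: l') := by
      by_cases hbz : b = z
      · exact ⟨[], hb, hbz⟩
      · exact ⟨pl b, hb, hpl b ⟨hbA, hbz⟩⟩
    obtain ⟨l', hl'⟩ := hcyc
    have h₀ : w₀ ∈ A ∧ w₀ ≠ z := ⟨hw₀A, hw₀⟩
    have hpath2 : pathOK (↑T : Set (S × S)) w₀ z (pl w₀ ++ (b :: l')) :=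
      pathOK_append (hpl w₀ h₀) hl'
    have heq := hplu w₀ h₀ _ hpath2
    have hlen := congrArg List.length heq
    simp only [List.length_append, List.length_cons] at hlen
    omega
  -- every edge of `T` is an out-edge
  have hedge : ∀ p ∈ T, p.1 ≠ z ∧ p.2 = f p.1 := by
    intro p hp
    have hp1A : p.1 ∈ A := (hT.1 p hp).1
    have hp2A : p.2 ∈ A := (hT.1 p hp).2.1
    have hp1z : p.1 ≠ z := by
      intro hz1
      have hp' : (p.1, p.2) ∈ T := by simpa using hp
      rw [hz1] at hp'
      exact hroot p.2 hp'
    refine ⟨hp1z, ?_⟩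
    have hmem : ((p.1, p.2) : S × S) ∈ T := by simpa using hp
    have hpath : ∃ l', pathOK (↑T : Set (S × S)) p.1 z (p.2 :: l') := by
      by_cases h2z : p.2 = z
      · exact ⟨[], hmem, h2z⟩
      · exact ⟨pl p.2, hmem, hpl p.2 ⟨hp2A, h2z⟩⟩
    obtain ⟨l', hl'⟩ := hpath
    have := hplu p.1 ⟨hp1A, hp1z⟩ _ hl'
    have : (p.2 :: l').headI = (pl p.1).headI := by rw [this]
    simpa [hf_def] using this
  refine ⟨f, rank, ?_, hedge, ?_, ?_⟩
  · intro v hv hvz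
    exact ((hshape v ⟨hv, hvz⟩).choose_spec.2).1
  · -- T is the graph of f on A.erase z
    ext p
    constructor
    · intro hp
      have h1 := hedge p hp
      have hp1A : p.1 ∈ A := (hT.1 p hp).1
      refine Finset.mem_image.2 ⟨p.1, Finset.mem_erase.2 ⟨h1.1, hp1A⟩, ?_⟩
      rw [← h1.2]
    · intro hp
      obtain ⟨v, hv, hvp⟩ := Finset.mem_image.1 hp
      have hv' := Finset.mem_erase.1 hv
      rw [← hvp]
      exact ((hshape v ⟨hv'.2, hv'.1⟩).choose_spec.2).1
  · intro v hv hvz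
    obtain ⟨l', hc, hmem, hrest⟩ := hshape v ⟨hv, hvz⟩
    have hfA : f v ∈ A := (hT.1 _ hmem).2.1
    have hAd : Ad v (f v) := (hT.1 _ hmem).2.2
    refine ⟨hfA, hAd, ?_⟩
    by_cases hfz : f v = z
    · exact Or.inl hfz
    · refine Or.inr ⟨hfz, ?_⟩
      have : l' = pl (f v) := hplu (f v) ⟨hfA, hfz⟩ l' hrest
      simp only [hrank_def]
      rw [← this, hc]
      simp

/-- From a rank function, the parent map iterates to the root. -/
lemma reaches_of_rank {f : S → S} {rank : S → ℕ}
    (H : ∀ v ∈ A, v ≠ z → f v ∈ A ∧ (f v = z ∨ (f v ≠ z ∧ rank (f v) < rank v))) :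
    ∀ v ∈ A, v ≠ z → ∃ n, 0 < n ∧ f^[n] v = z ∧ ∀ i < n, f^[i] v ∈ A ∧ f^[i] v ≠ z := by
  intro v hv hvz
  generalize hr : rank v = n
  revert v
  induction n using Nat.strong_induction_on with
  | _ n ih =>
  intro v hv hvz hr
  subst hr
  obtain ⟨hfA, hcase⟩ := H v hv hvz
  rcases hcase with hfz | ⟨hfz, hlt⟩
  · refine ⟨1, Nat.one_pos, by simpa using hfz, ?_⟩
    intro i hi
    interval_cases i
    exact ⟨hv, hvz⟩
  · obtain ⟨n, hn, hz', hint⟩ := ih (rank (f v)) hlt (f v) hfA hfz rfl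
    refine ⟨n + 1, Nat.succ_pos _, by rw [Function.iterate_succ_apply]; exact hz', ?_⟩
    intro i hi
    cases i with
    | zero => exact ⟨hv, hvz⟩
    | succ i =>
        rw [Function.iterate_succ_apply]
        exact hint i (by omega)

lemma no_cycle {f : S → S} {v zz : S} {p n : ℕ} (hp : 0 < p) (hcyc : f^[p] v = v)
    (havoid : ∀ i < p, f^[i] v ≠ zz) (hreach : f^[n] v = zz) : False := by
  have hall : ∀ j, f^[j] v = f^[j % p] v := by
    intro j
    induction j using Nat.strong_induction_on with
    | _ j ih =>
      by_cases hj : j < p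
      · rw [Nat.mod_eq_of_lt hj]
      · push_neg at hj
        have h2 : f^[j] v = f^[j - p] v := by
          have h1 : j = (j - p) + p := by omega
          nth_rewrite 1 [h1]
          rw [Function.iterate_add_apply, hcyc]
        rw [h2, ih (j - p) (by omega), Nat.mod_eq_sub_mod hj]
  exact havoid (n % p) (Nat.mod_lt _ hp) (by rw [← hall n]; exact hreach)

end Trees

/-- Trace of the iteration of `g`, as a list. -/
def trace {S : Type*} (g : S → S) : ℕ → S → List S
  | 0, _ => []
  | n+1, v => g v :: trace g n (g v)

lemma build_tree {S : Type*} [DecidableEq S] {Ad : S → S → Prop} {A : Finset S} {z : S}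
    (g : S → S)
    (H1 : ∀ v ∈ A, v ≠ z → g v ∈ A ∧ Ad v (g v))
    (H2 : ∀ v ∈ A, v ≠ z → ∃ n, g^[n] v = z) :
    IsTreeRootedAt Ad A ((A.erase z).image fun v => (v, g v)) z := by
  classical
  set T' := (A.erase z).image fun v => (v, g v) with hT'
  have hmem : ∀ v b : S, ((v, b) ∈ (↑T' : Set (S × S))) ↔ (v ∈ A ∧ v ≠ z ∧ b = g v) := by
    intro v b
    rw [Finset.mem_coe, hT']
    constructor
    · intro h
      obtain ⟨u, hu, he⟩ := Finset.mem_image.1 h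
      obtain ⟨huz, huA⟩ := Finset.mem_erase.1 hu
      rw [Prod.ext_iff] at he
      obtain ⟨h1, h2⟩ := he
      dsimp at h1 h2
      subst h1
      exact ⟨huA, huz, h2.symm⟩
    · rintro ⟨hvA, hvz, rfl⟩
      exact Finset.mem_image.2 ⟨v, Finset.mem_erase.2 ⟨hvz, hvA⟩, rfl⟩
  have ex : ∀ n (v : S), v ∈ A → v ≠ z → g^[n] v = z →
      (∀ i, 0 < i → i < n → g^[i] v ≠ z) →
      pathOK (↑T' : Set (S × S)) v z (trace g n v) := by
    intro n
    induction n with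
    | zero => intro v _ hvz h0 _; exact absurd h0 hvz
    | succ n ih =>
        intro v hv hvz hz' hmin
        refine ⟨(hmem v (g v)).2 ⟨hv, hvz, rfl⟩, ?_⟩
        by_cases hgz : g v = z
        · cases n with
          | zero => exact hgz
          | succ n =>
              have h1 := hmin 1 one_pos (by omega)
              rw [Function.iterate_one] at h1
              exact absurd hgz h1
        · have hgA := (H1 v hv hvz).1
          apply ih (g v) hgA hgz
          · rw [← Function.iterate_succ_apply]
            exact hz'
          · intro i hi hin
            have := hmin (i+1) (by omega) (by omega)
            rwa [Function.iterate_succ_apply] at this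
  have uniq : ∀ (l : List S) (v : S), v ∈ A → v ≠ z →
      pathOK (↑T' : Set (S × S)) v z l →
      ∀ n, g^[n] v = z → (∀ i, 0 < i → i < n → g^[i] v ≠ z) → l = trace g n v := by
    intro l
    induction l with
    | nil => intro v _ hvz h _ _ _; exact absurd h hvz
    | cons b l2 ih =>
        intro v hv hvz hpath n hnz hmin
        obtain ⟨hb, hpath2⟩ := hpath
        obtain ⟨-, -, rfl⟩ := (hmem v b).1 hb
        have hnpos : 0 < n := by
          rcases Nat.eq_zero_or_pos n with h | h
          · exact absurd (by simpa [h] using hnz) hvz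
          · exact h
        by_cases hgz : g v = z
        · have hl2 : l2 = [] := by
            cases l2 with
            | nil => rfl
            | cons c l3 =>
                obtain ⟨h1, h2, -⟩ := (hmem (g v) c).1 hpath2.1
                exact absurd hgz h2
          subst hl2
          have hn1 : n = 1 := by
            by_contra hne1
            exact hmin 1 one_pos (by omega) (by simpa using hgz)
          subst hn1
          simp [trace]
        · have hgA := (H1 v hv hvz).1
          obtain ⟨n', rfl⟩ : ∃ n', n = n' + 1 := ⟨n - 1, by omega⟩
          have h1 : g^[n'] (g v) = z := by
            rw [← Function.iterate_succ_apply]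
            exact hnz
          have h2 : ∀ i, 0 < i → i < n' → g^[i] (g v) ≠ z := by
            intro i hi hin
            have := hmin (i+1) (by omega) (by omega)
            rwa [Function.iterate_succ_apply] at this
          rw [ih (g v) hgA hgz hpath2 n' h1 h2]
          rfl
  constructor
  · intro p hp
    obtain ⟨u, hu, he⟩ := Finset.mem_image.1 hp
    obtain ⟨huz, huA⟩ := Finset.mem_erase.1 hu
    subst he
    exact ⟨huA, (H1 u huA huz).1, (H1 u huA huz).2⟩
  · intro w hw hwz
    have hfind := Nat.find_spec (H2 w hw hwz)
    have hmin : ∀ i, 0 < i → i < Nat.find (H2 w hw hwz) → g^[i] w ≠ z :=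
      fun i _ hi => Nat.find_min _ hi
    exact ⟨trace g (Nat.find (H2 w hw hwz)) w,
      ex _ w hw hwz hfind hmin,
      fun l hl => uniq l w hw hwz hl _ hfind hmin⟩

lemma treeRes_image {S : Type*} [DecidableEq S] (ρ : S → S → ℝ) (B : Finset S) (g : S → S) :
    treeRes ρ (B.image fun v => (v, g v)) = ∑ v ∈ B, ρ v (g v) := by
  unfold treeRes
  rw [Finset.sum_image (fun x _ y _ h => (Prod.ext_iff.1 h).1)]

/-! ### Potential / counting lemmas -/

section Potential

variable (G : SimpleGraph V)

/-- Number of bichromatic edges at a vertex. -/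
def bcard (x : V → ℤ) (u : V) : ℕ :=
  (univ.filter fun v => G.Adj u v ∧ x v ≠ x u).card

/-- Total over vertices of bichromatic incidences (twice the bichromatic count). -/
def mcount (x : V → ℤ) : ℕ := ∑ u, bcard G x u

variable {G}

lemma swap_self (x : V → ℤ) (i : V) : swap x i i = x := by
  funext v
  by_cases h : v = i <;> simp [swap, h]

lemma swap_invol (x : V → ℤ) (i j : V) : swap (swap x i j) i j = x := by
  funext v
  by_cases h1 : v = i
  · subst h1
    by_cases h2 : j = v <;> simp [swap, h2]
  · by_cases h2 : v = j
    · subst h2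
      simp [swap, h1]
    · simp [swap, h1, h2]

lemma swap_apply_ne (x : V → ℤ) {i j v : V} (h1 : v ≠ i) (h2 : v ≠ j) :
    swap x i j v = x v := by simp [swap, h1, h2]

lemma isColoring_swap {x : V → ℤ} (hx : IsColoring x) (i j : V) :
    IsColoring (swap x i j) := by
  intro v
  unfold swap
  split_ifs <;> apply hx

lemma mem_colorings_iff {x : V → ℤ} : x ∈ colorings V ↔ IsColoring x := by
  unfold colorings IsColoring
  rw [Fintype.mem_piFinset]
  apply forall_congr'
  intro v
  simp

lemma plusCount_swap (x : V → ℤ) (i j : V) : plusCount (swap x i j) = plusCount x := by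
  have hc : swap x i j = x ∘ (Equiv.swap i j) := by
    funext v
    simp [swap, Equiv.swap_apply_def]
    split_ifs <;> rfl
  rw [hc]
  unfold plusCount
  apply Finset.card_bij (fun v _ => (Equiv.swap i j) v)
  · intro a ha
    simp only [Finset.mem_filter, Finset.mem_univ, true_and, Function.comp_apply] at ha ⊢
    exact ha
  · intro a _ b _ h
    exact (Equiv.swap i j).injective h
  · intro b hb
    refine ⟨(Equiv.swap i j).symm b, ?_, by simp⟩
    simp only [Finset.mem_filter, Finset.mem_univ, true_and, Function.comp_apply] at hb ⊢
    simpa using hb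

/-- The subgraph of bichromatic edges. -/
def bgraph (G : SimpleGraph V) (x : V → ℤ) : SimpleGraph V where
  Adj u v := G.Adj u v ∧ x u ≠ x v
  symm := ⟨fun u v h => ⟨G.adj_symm h.1, fun he => h.2 he.symm⟩⟩
  loopless := ⟨fun v h => G.loopless.irrefl v h.1⟩

lemma mcount_eq_twice_bichrom (G : SimpleGraph V) (x : V → ℤ) :
    mcount G x = 2 * bichromCount G x := by
  classical
  haveI : DecidableRel (bgraph G x).Adj := fun a b => Classical.dec _
  have hdeg : ∀ u, (bgraph G x).degree u = bcard G x u := by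
    intro u
    rw [← SimpleGraph.card_neighborFinset_eq_degree]
    unfold bcard
    congr 1
    ext v
    simp only [SimpleGraph.mem_neighborFinset, Finset.mem_filter, Finset.mem_univ, true_and]
    show G.Adj u v ∧ x u ≠ x v ↔ G.Adj u v ∧ x v ≠ x u
    rw [ne_comm]
  have hedge : (bgraph G x).edgeFinset = G.edgeFinset.filter
      (fun e => Sym2.lift ⟨fun u v => x u ≠ x v, fun u v => by simp [ne_comm]⟩ e) := by
    ext e
    induction e with
    | _ u v =>
      simp only [SimpleGraph.mem_edgeFinset, Finset.mem_filter, SimpleGraph.mem_edgeSet,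
        Sym2.lift_mk]
      show (bgraph G x).Adj u v ↔ _
      rfl
  have hsum := SimpleGraph.sum_degrees_eq_twice_card_edges (bgraph G x)
  unfold mcount
  calc ∑ u, bcard G x u = ∑ u, (bgraph G x).degree u := by
        apply Finset.sum_congr rfl
        intro u _
        exact (hdeg u).symm
    _ = 2 * (bgraph G x).edgeFinset.card := hsum
    _ = 2 * bichromCount G x := by
          rw [hedge]
          unfold bichromCount
          congr 1

lemma wdeg_eq (G : SimpleGraph V) (x : V → ℤ) (u : V) :
    wdeg G x u = ((univ.filter (G.Adj u ·)).card : ℤ) - 2 * (bcard G x u : ℤ) := by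
  unfold wdeg bcard
  have h1 : (univ.filter fun j => G.Adj u j ∧ x j = x u)
      = (univ.filter (G.Adj u ·)).filter (fun j => x j = x u) := by
    rw [Finset.filter_filter]
  have h2 : (univ.filter fun j => G.Adj u j ∧ x j ≠ x u)
      = (univ.filter (G.Adj u ·)).filter (fun j => ¬ (x j = x u)) := by
    rw [Finset.filter_filter]
  have h3 := Finset.card_filter_add_card_filter_not
    (s := univ.filter (G.Adj u ·)) (p := fun j => x j = x u)
  rw [h1, h2]
  push_cast
  omega

lemma bcard_cast (G : SimpleGraph V) (x : V → ℤ) (u : V) :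
    (bcard G x u : ℤ) = ∑ v, (if G.Adj u v ∧ x v ≠ x u then (1 : ℤ) else 0) := by
  unfold bcard
  rw [Finset.card_filter, Nat.cast_sum]
  apply Finset.sum_congr rfl
  intro v _
  split_ifs <;> simp

lemma mcount_swap_delta (G : SimpleGraph V) (x : V → ℤ) {i j : V} (hij : i ≠ j) :
    (mcount G (swap x i j) : ℤ) - mcount G x =
      2 * (((bcard G (swap x i j) i : ℤ) - bcard G x i)
        + ((bcard G (swap x i j) j : ℤ) - bcard G x j)) := by
  classical
  set y := swap x i j with hy
  set d : V → V → ℤ := fun u v =>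
    (if G.Adj u v ∧ y v ≠ y u then (1:ℤ) else 0) - (if G.Adj u v ∧ x v ≠ x u then (1:ℤ) else 0)
    with hd
  have hb : ∀ u : V, (bcard G y u : ℤ) - bcard G x u = ∑ v, d u v := by
    intro u
    rw [bcard_cast, bcard_cast, ← Finset.sum_sub_distrib]
  have flip : ∀ (w : V → ℤ) (u v : V), (G.Adj u v ∧ w v ≠ w u) ↔ (G.Adj v u ∧ w u ≠ w v) := by
    intro w u v
    constructor
    · rintro ⟨h1, h2⟩; exact ⟨h1.symm, h2.symm⟩
    · rintro ⟨h1, h2⟩; exact ⟨h1.symm, h2.symm⟩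
  have hdsym : ∀ u v, d u v = d v u := by
    intro u v
    simp only [hd]
    rw [if_congr (flip y u v) rfl rfl, if_congr (flip x u v) rfl rfl]
  have hdoff : ∀ u v, u ≠ i → u ≠ j → v ≠ i → v ≠ j → d u v = 0 := by
    intro u v hui huj hvi hvj
    simp only [hd, hy]
    rw [swap_apply_ne x hvi hvj, swap_apply_ne x hui huj]
    ring
  have hdij : d i j = 0 := by
    have hyi : y i = x j := by simp [hy, swap]
    have hyj : y j = x i := by simp [hy, swap, hij, Ne.symm hij]
    simp only [hd, hyi, hyj]
    have : (G.Adj i j ∧ x i ≠ x j) ↔ (G.Adj i j ∧ x j ≠ x i) := by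
      constructor
      · rintro ⟨h1, h2⟩; exact ⟨h1, h2.symm⟩
      · rintro ⟨h1, h2⟩; exact ⟨h1, h2.symm⟩
    rw [if_congr this rfl rfl]
    ring
  have hdji : d j i = 0 := by rw [hdsym]; exact hdij
  have hdii : d i i = 0 := by
    simp only [hd]
    rw [if_neg (fun h => G.loopless.irrefl i h.1), if_neg (fun h => G.loopless.irrefl i h.1)]
    ring
  have hdjj : d j j = 0 := by
    simp only [hd]
    rw [if_neg (fun h => G.loopless.irrefl j h.1), if_neg (fun h => G.loopless.irrefl j h.1)]
    ring
  set P : Finset V := {i, j} with hP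
  have hPsum : ∀ F : V → ℤ, ∑ u ∈ P, F u = F i + F j := by
    intro F
    rw [hP, Finset.sum_insert (by simp [hij]), Finset.sum_singleton]
  have hrow : ∀ u, u ∉ P → ∑ v, d u v = ∑ v ∈ P, d u v := by
    intro u hu
    simp only [hP, Finset.mem_insert, Finset.mem_singleton, not_or] at hu
    rw [← Finset.sum_sdiff (Finset.subset_univ P)]
    have : ∑ v ∈ univ \ P, d u v = 0 := by
      apply Finset.sum_eq_zero
      intro v hv
      simp only [Finset.mem_sdiff, hP, Finset.mem_insert, Finset.mem_singleton, not_or] at hv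
      exact hdoff u v hu.1 hu.2 hv.2.1 hv.2.2
    rw [this, zero_add]
  have hcast : (mcount G y : ℤ) - mcount G x = ∑ u, (∑ v, d u v) := by
    unfold mcount
    rw [Nat.cast_sum, Nat.cast_sum, ← Finset.sum_sub_distrib]
    exact Finset.sum_congr rfl (fun u _ => hb u)
  have hPP : ∑ v ∈ P, ∑ u ∈ P, d u v = 0 := by
    rw [hPsum (fun v => ∑ u ∈ P, d u v), hPsum (fun u => d u i), hPsum (fun u => d u j),
      hdii, hdij, hdji, hdjj]
    ring
  have houter : ∑ u ∈ univ \ P, ∑ v, d u v = (∑ u ∈ P, ∑ v, d u v) := by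
    calc ∑ u ∈ univ \ P, ∑ v, d u v
        = ∑ u ∈ univ \ P, ∑ v ∈ P, d u v :=
          Finset.sum_congr rfl (fun u hu => hrow u (Finset.mem_sdiff.1 hu).2)
      _ = ∑ v ∈ P, ∑ u ∈ univ \ P, d u v := Finset.sum_comm
      _ = ∑ v ∈ P, (∑ u, d u v - ∑ u ∈ P, d u v) := by
            apply Finset.sum_congr rfl
            intro v _
            rw [← Finset.sum_sdiff (Finset.subset_univ P)]
            ring
      _ = (∑ v ∈ P, ∑ u, d u v) - ∑ v ∈ P, ∑ u ∈ P, d u v := Finset.sum_sub_distrib _ _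
      _ = ∑ v ∈ P, ∑ u, d u v := by rw [hPP]; ring
      _ = ∑ v ∈ P, ∑ u, d v u := by
            apply Finset.sum_congr rfl
            intro v _
            exact Finset.sum_congr rfl (fun u _ => hdsym u v)
  have htotal : ∑ u, (∑ v, d u v) = 2 * (∑ u ∈ P, ∑ v, d u v) := by
    rw [← Finset.sum_sdiff (Finset.subset_univ P), houter]
    ring
  rw [hcast, htotal, hPsum (fun u => ∑ v, d u v), hb i, hb j]

end Potential

section Potential2

lemma util_swap_diff (G : SimpleGraph V) (r : ℝ) (εc : V → ℝ) (x : V → ℤ) (i j : V) :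
    (util G r εc x i + util G r εc x j)
      - (util G r εc (swap x i j) i + util G r εc (swap x i j) j)
      = r * ((mcount G (swap x i j) : ℝ) - (mcount G x : ℝ)) := by
  by_cases hij : i = j
  · subst hij
    rw [swap_self]
    ring
  · have key := mcount_swap_delta G x hij
    set y := swap x i j with hy
    have hzkey : (wdeg G x i + wdeg G x j) - (wdeg G y i + wdeg G y j)
        = (mcount G y : ℤ) - (mcount G x : ℤ) := by
      rw [wdeg_eq G x i, wdeg_eq G x j, wdeg_eq G y i, wdeg_eq G y j, key]
      ring
    have hrkey : ((wdeg G x i : ℝ) + wdeg G x j) - ((wdeg G y i : ℝ) + wdeg G y j)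
        = (mcount G y : ℝ) - (mcount G x : ℝ) := by exact_mod_cast hzkey
    unfold util
    rw [← hrkey]
    ring

lemma resist_eq (G : SimpleGraph V) (r : ℝ) (εc : V → ℝ) (x : V → ℤ) (e' : V × V)
    (x' : V → ℤ) :
    resist G r εc x e' x' =
      if x' = x then max 0 (r * ((mcount G x : ℝ) - (mcount G (swap x e'.1 e'.2) : ℝ)))
      else max 0 (r * ((mcount G (swap x e'.1 e'.2) : ℝ) - (mcount G x : ℝ))) := by
  have key := util_swap_diff G r εc x e'.1 e'.2
  simp only [resist]
  by_cases h : x' = x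
  · rw [if_pos h, if_pos h]
    congr 1
    linarith
  · rw [if_neg h, if_neg h, key]


lemma resist_nonneg (G : SimpleGraph V) (r : ℝ) (εc : V → ℝ) (x : V → ℤ) (e' : V × V)
    (x' : V → ℤ) : 0 ≤ resist G r εc x e' x' := by
  simp only [resist]
  split_ifs <;> exact le_max_left 0 _

lemma tres_nonneg (G : SimpleGraph V) (r : ℝ) (εc : V → ℝ)
    (s t : (V → ℤ) × (V × V)) : 0 ≤ tres G r εc s t :=
  resist_nonneg G r εc s.1 t.2 t.1

lemma mem_Omega_iff {k : ℕ} {s : (V → ℤ) × (V × V)} :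
    s ∈ Omega V k ↔ IsColoring s.1 ∧ plusCount s.1 = k := by
  unfold Omega
  rw [Finset.mem_product]
  simp [Finset.mem_filter, mem_colorings_iff]

end Potential2

/-! ### Elimination of costly lazy edges from a minimal tree -/

section ElimBad

variable {k : ℕ} (G : SimpleGraph V) (r : ℝ) (εc : V → ℝ) (D : (V × V) → (V × V) → ℝ)

/-- A "bad lazy edge": the coloring does not change but the forgone swap would strictly
decrease the number of bichromatic incidences. -/
def badP (G : SimpleGraph V) (p : ((V → ℤ) × (V × V)) × ((V → ℤ) × (V × V))) : Prop :=
  p.2.1 = p.1.1 ∧ mcount G (swap p.1.1 p.2.2.1 p.2.2.2) < mcount G p.1.1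

set_option maxHeartbeats 1000000 in
lemma elim_bad (hr : 0 < r) (hD : IsScheduler D) {X W₀ : (V → ℤ) × (V × V)}
    (hXA : X ∈ Omega V k) (hW₀A : W₀ ∈ Omega V k) (hW₀X : W₀ ≠ X)
    (c : ℝ) (hc : ∀ T'', IsTreeRootedAt (Adm D) (Omega V k) T'' X →
      c ≤ treeRes (tres G r εc) T'') :
    ∀ (n : ℕ) (T : Finset (((V → ℤ) × (V × V)) × ((V → ℤ) × (V × V)))),
      (T.filter (badP G)).card ≤ n →
      IsTreeRootedAt (Adm D) (Omega V k) T X → treeRes (tres G r εc) T ≤ c →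
      ∃ T', IsTreeRootedAt (Adm D) (Omega V k) T' X ∧ treeRes (tres G r εc) T' ≤ c ∧
        ∀ p ∈ T', ¬ badP G p := by
  classical
  set A := Omega V k with hA
  set ρ := tres G r εc with hρ
  intro n
  induction n with
  | zero =>
      intro T hcard hT hres
      refine ⟨T, hT, hres, ?_⟩
      intro p hp hbad
      have : p ∈ T.filter (badP G) := Finset.mem_filter.2 ⟨hp, hbad⟩
      have := Finset.card_pos.2 ⟨p, this⟩
      omega
  | succ n ih =>
      intro T hcard hT hres
      by_cases hzero : (T.filter (badP G)).card = 0
      · exact ih T (by omega) hT hres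
      -- pick a bad edge
      obtain ⟨p, hpmem⟩ := Finset.card_pos.1 (by omega : 0 < (T.filter (badP G)).card)
      have hp : p ∈ T := (Finset.mem_filter.1 hpmem).1
      have hbad : badP G p := (Finset.mem_filter.1 hpmem).2
      -- extract the out-map of T
      obtain ⟨f, rank, hf1, hf2, hf3, hf4⟩ := tree_out hT W₀ hW₀A hW₀X
      have hresT : treeRes ρ T = ∑ v ∈ A.erase X, ρ v (f v) := by
        rw [hf3]
        exact treeRes_image ρ _ f
      have reachf : ∀ v ∈ A, v ≠ X →
          ∃ n, 0 < n ∧ f^[n] v = X ∧ ∀ i < n, f^[i] v ∈ A ∧ f^[i] v ≠ X :=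
        reaches_of_rank (fun v hv hz => ⟨(hf4 v hv hz).1, (hf4 v hv hz).2.2⟩)
      set v := p.1 with hv_def
      set t := p.2 with ht_def
      have hvA : v ∈ A := (hT.1 p hp).1
      have htA : t ∈ A := (hT.1 p hp).2.1
      have hAdm_vt : Adm D v t := (hT.1 p hp).2.2
      have hvX : v ≠ X := (hf2 p hp).1
      have ht_fv : t = f v := (hf2 p hp).2
      set x₀ := v.1 with hx₀
      set e' := t.2 with he'
      set s := swap x₀ e'.1 e'.2 with hs
      set u : (V → ℤ) × (V × V) := (s, e') with hu
      have ht1 : t.1 = x₀ := hbad.1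
      have hMlt : mcount G s < mcount G x₀ := hbad.2
      have hsx : s ≠ x₀ := by
        intro h
        rw [h] at hMlt
        exact lt_irrefl _ hMlt
      have hvcol : IsColoring x₀ ∧ plusCount x₀ = k := mem_Omega_iff.1 hvA
      have huA : u ∈ A := by
        rw [hA]
        refine mem_Omega_iff.2 ⟨isColoring_swap hvcol.1 _ _, ?_⟩
        rw [hu]
        show plusCount s = k
        rw [hs, plusCount_swap]
        exact hvcol.2
      have hAdm_vu : Adm D v u := ⟨hAdm_vt.1, Or.inr rfl⟩
      -- resistances of the edges involved
      have hMlt' : (mcount G s : ℝ) < (mcount G x₀ : ℝ) := by exact_mod_cast hMlt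
      set dval : ℝ := r * ((mcount G x₀ : ℝ) - (mcount G s : ℝ)) with hdval
      have hd_pos : 0 < dval := mul_pos hr (by linarith)
      have hρvt : ρ v t = dval := by
        rw [hρ]
        show resist G r εc v.1 t.2 t.1 = dval
        rw [resist_eq, if_pos (show t.1 = x₀ from ht1)]
        exact max_eq_right hd_pos.le
      have hρvu : ρ v u = 0 := by
        rw [hρ]
        show resist G r εc v.1 u.2 u.1 = 0
        rw [resist_eq]
        rw [if_neg (show u.1 ≠ x₀ from hsx)]
        apply max_eq_left
        have : (mcount G (swap x₀ u.2.1 u.2.2) : ℝ) - (mcount G x₀ : ℝ) ≤ 0 := by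
          show (mcount G (swap x₀ e'.1 e'.2) : ℝ) - (mcount G x₀ : ℝ) ≤ 0
          rw [← hs]
          linarith
        exact mul_nonpos_of_nonneg_of_nonpos hr.le this
      have hρut : ρ u t = dval := by
        rw [hρ]
        show resist G r εc u.1 t.2 t.1 = dval
        rw [resist_eq]
        rw [if_neg (show t.1 ≠ s from by rw [ht1]; exact Ne.symm hsx)]
        have hswapback : swap s t.2.1 t.2.2 = x₀ := by
          rw [hs, ← he']
          exact swap_invol x₀ e'.1 e'.2
        show max 0 (r * ((mcount G (swap u.1 t.2.1 t.2.2) : ℝ) - (mcount G u.1 : ℝ))) = dval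
        have hu1 : u.1 = s := rfl
        rw [hu1, hswapback]
        exact max_eq_right hd_pos.le
      -- rerouting v directly to u is impossible by minimality of the resistance
      have reroute_absurd : ∀ (hH2 : ∀ w ∈ A, w ≠ X → ∃ m, (Function.update f v u)^[m] w = X),
          False := by
        intro hH2
        set g := Function.update f v u with hg
        have hH1 : ∀ w ∈ A, w ≠ X → g w ∈ A ∧ Adm D w (g w) := by
          intro w hw hwX
          by_cases hwv : w = v
          · subst hwv
            rw [hg, Function.update_self]
            exact ⟨huA, hAdm_vu⟩
          · rw [hg, Function.update_of_ne hwv]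
            exact ⟨(hf4 w hw hwX).1, (hf4 w hw hwX).2.1⟩
        have hT₂ := build_tree (Ad := Adm D) (A := A) (z := X) g hH1 hH2
        have hres₂ : treeRes ρ ((A.erase X).image fun w => (w, g w))
            = ∑ w ∈ A.erase X, ρ w (g w) := treeRes_image ρ _ g
        have hvAX : v ∈ A.erase X := Finset.mem_erase.2 ⟨hvX, hvA⟩
        have hsplit : ∀ F : ((V → ℤ) × (V × V)) → ℝ,
            ∑ w ∈ A.erase X, F w = F v + ∑ w ∈ (A.erase X).erase v, F w :=
          fun F => (Finset.add_sum_erase _ F hvAX).symm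
        have hgv : g v = u := by rw [hg, Function.update_self]
        have hcongr : ∑ w ∈ (A.erase X).erase v, ρ w (g w)
            = ∑ w ∈ (A.erase X).erase v, ρ w (f w) := by
          apply Finset.sum_congr rfl
          intro w hw
          rw [hg, Function.update_of_ne (Finset.ne_of_mem_erase hw)]
        have hval : treeRes ρ ((A.erase X).image fun w => (w, g w))
            = treeRes ρ T - dval := by
          rw [hres₂, hsplit (fun w => ρ w (g w)), hgv, hρvu, hcongr, hresT,
            hsplit (fun w => ρ w (f w)), ← ht_fv, hρvt]
          ring
        have h1 : c ≤ treeRes ρ T - dval := by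
          rw [← hval]
          exact hc _ hT₂
        linarith
      by_cases huX : u = X
      · -- direct rerouting works
        exfalso
        apply reroute_absurd
        intro w hw hwX
        obtain ⟨nw, -, hnwX, -⟩ := reachf w hw hwX
        clear hres hcard
        induction nw using Nat.strong_induction_on generalizing w with
        | _ nw ihw =>
        cases nw with
        | zero => exact absurd hnwX hwX
        | succ nw =>
          by_cases hwv : w = v
          · subst hwv
            exact ⟨1, by rw [Function.iterate_one, Function.update_self, huX]⟩
          · have hgw : Function.update f v u w = f w := Function.update_of_ne hwv _ _
            have hfwA : f w ∈ A := (hf4 w hw hwX).1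
            have hfw : f^[nw] (f w) = X := by
              rw [← Function.iterate_succ_apply]
              exact hnwX
            by_cases hfwX : f w = X
            · exact ⟨1, by rw [Function.iterate_one, hgw, hfwX]⟩
            · obtain ⟨m, hm⟩ := ihw nw (Nat.lt_succ_self _) (f w) hfwA hfwX hfw
              exact ⟨m + 1, by rw [Function.iterate_succ_apply, hgw, hm]⟩
      -- now u ≠ X
      obtain ⟨nu, hnu0, hnuX, hnuint⟩ := reachf u huA huX
      by_cases hpass : ∃ i < nu, f^[i] u = v
      · -- the double rerouting
        obtain ⟨nv, hnv0, hnvX, hnvint⟩ := reachf v hvA hvX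
        have no_ret : ∀ q, 0 < q → (∀ i < q, f^[i] v ≠ X) → f^[q] v = v → False := by
          intro q hq havoid hcyc
          exact no_cycle hq hcyc havoid hnvX
        have hvu : v ≠ u := fun h => hsx (congrArg Prod.fst h).symm
        have hvt : v ≠ t := by
          intro h
          apply no_ret 1 one_pos
          · intro i hi
            interval_cases i
            simpa using hvX
          · rw [Function.iterate_one, ← ht_fv]
            exact h.symm
        obtain ⟨i₀, hi₀, hfi₀⟩ := hpass
        obtain ⟨nt, hntX, hntint⟩ : ∃ nt, f^[nt] t = X ∧
            ∀ i < nt, f^[i] t ∈ A ∧ f^[i] t ≠ X := by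
          by_cases htX : t = X
          · exact ⟨0, by simpa using htX, fun i hi => absurd hi (by omega)⟩
          · obtain ⟨nt, -, h1, h2⟩ := reachf t htA htX
            exact ⟨nt, h1, h2⟩
        have hav_v : ∀ i < nt, f^[i] t ≠ v := by
          intro i hi hiv
          apply no_ret (i + 1) (by omega)
          · intro j hj
            cases j with
            | zero => simpa using hvX
            | succ j =>
                have hjt : f^[j+1] v = f^[j] t := by
                  rw [Function.iterate_succ_apply, ← ht_fv]
                rw [hjt]
                exact (hntint j (by omega)).2
          · have hjt : f^[i+1] v = f^[i] t := by
              rw [Function.iterate_succ_apply, ← ht_fv]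
            rw [hjt, hiv]
        have hav_u : ∀ i < nt, f^[i] t ≠ u := by
          intro i hi hiu
          apply no_ret (1 + i + i₀) (by omega)
          · intro j hj
            rcases Nat.lt_or_ge j 1 with h1 | h1
            · interval_cases j
              simpa using hvX
            · rcases Nat.lt_or_ge j (1 + i) with h2 | h2
              · have hjt : f^[j] v = f^[j-1] t := by
                  have hj1 : j = (j - 1) + 1 := by omega
                  nth_rewrite 1 [hj1]
                  rw [Function.iterate_succ_apply, ← ht_fv]
                rw [hjt]
                exact (hntint (j-1) (by omega)).2
              · have hjt : f^[j] v = f^[j - 1 - i] u := by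
                  have hj1 : j = ((j - 1 - i) + i) + 1 := by omega
                  nth_rewrite 1 [hj1]
                  rw [Function.iterate_succ_apply, ← ht_fv,
                    Function.iterate_add_apply, hiu]
                rw [hjt]
                exact (hnuint (j - 1 - i) (by omega)).2
          · have e1 : f^[i+1] v = f^[i] t := by
              rw [Function.iterate_succ_apply, ← ht_fv]
            have e2 : f^[1 + i + i₀] v = f^[i₀] (f^[i+1] v) := by
              rw [← Function.iterate_add_apply]
              congr 1
              omega
            rw [e2, e1, hiu, hfi₀]
        set g := Function.update (Function.update f v u) u t with hg
        have hgv : g v = u := by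
          rw [hg, Function.update_of_ne hvu, Function.update_self]
        have hgu : g u = t := by rw [hg, Function.update_self]
        have hgweq : ∀ w, w ≠ v → w ≠ u → g w = f w := by
          intro w h1 h2
          rw [hg, Function.update_of_ne h2, Function.update_of_ne h1]
        have hgt_iter : ∀ i ≤ nt, g^[i] t = f^[i] t := by
          intro i hi
          induction i with
          | zero => rfl
          | succ i ihi =>
              rw [Function.iterate_succ_apply', Function.iterate_succ_apply',
                ihi (by omega)]
              exact hgweq _ (hav_v i (by omega)) (hav_u i (by omega))
        have hAdm_ut : Adm D u t := by
          refine ⟨hD.2.2.1 e', Or.inr ?_⟩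
          show t.1 = swap u.1 t.2.1 t.2.2
          rw [ht1]
          exact (swap_invol x₀ e'.1 e'.2).symm
        have hH1 : ∀ w ∈ A, w ≠ X → g w ∈ A ∧ Adm D w (g w) := by
          intro w hw hwX
          by_cases h1 : w = v
          · subst h1
            rw [hgv]
            exact ⟨huA, hAdm_vu⟩
          · by_cases h2 : w = u
            · subst h2
              rw [hgu]
              exact ⟨htA, hAdm_ut⟩
            · rw [hgweq w h1 h2]
              exact ⟨(hf4 w hw hwX).1, (hf4 w hw hwX).2.1⟩
        have hreach_t : ∃ m, g^[m] t = X := ⟨nt, by rw [hgt_iter nt le_rfl]; exact hntX⟩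
        have hreach_u : ∃ m, g^[m] u = X := by
          obtain ⟨m, hm⟩ := hreach_t
          exact ⟨m + 1, by rw [Function.iterate_succ_apply, hgu, hm]⟩
        have hreach_v : ∃ m, g^[m] v = X := by
          obtain ⟨m, hm⟩ := hreach_u
          exact ⟨m + 1, by rw [Function.iterate_succ_apply, hgv, hm]⟩
        have hH2 : ∀ w ∈ A, w ≠ X → ∃ m, g^[m] w = X := by
          intro w hw hwX
          obtain ⟨nw, -, hnwX, -⟩ := reachf w hw hwX
          clear hres hcard
          induction nw using Nat.strong_induction_on generalizing w with
          | _ nw ihw =>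
          cases nw with
          | zero => exact absurd hnwX hwX
          | succ nw =>
            by_cases h1 : w = v
            · subst h1
              exact hreach_v
            · by_cases h2 : w = u
              · subst h2
                exact hreach_u
              · have hgw2 : g w = f w := hgweq w h1 h2
                have hfwA : f w ∈ A := (hf4 w hw hwX).1
                have hfw : f^[nw] (f w) = X := by
                  rw [← Function.iterate_succ_apply]
                  exact hnwX
                by_cases hfwX : f w = X
                · exact ⟨1, by rw [Function.iterate_one, hgw2, hfwX]⟩
                · obtain ⟨m, hm⟩ := ihw nw (Nat.lt_succ_self _) (f w) hfwA hfwX hfw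
                  exact ⟨m + 1, by rw [Function.iterate_succ_apply, hgw2, hm]⟩
        have hT₃ := build_tree (Ad := Adm D) (A := A) (z := X) g hH1 hH2
        have hres₃ : treeRes ρ ((A.erase X).image fun w => (w, g w))
            = ∑ w ∈ A.erase X, ρ w (g w) := treeRes_image ρ _ g
        have hvAX : v ∈ A.erase X := Finset.mem_erase.2 ⟨hvX, hvA⟩
        have huAX : u ∈ (A.erase X).erase v :=
          Finset.mem_erase.2 ⟨fun h => hvu h.symm, Finset.mem_erase.2 ⟨huX, huA⟩⟩
        have hsplit : ∀ F : ((V → ℤ) × (V × V)) → ℝ, ∑ w ∈ A.erase X, F w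
            = F v + (F u + ∑ w ∈ ((A.erase X).erase v).erase u, F w) := by
          intro F
          rw [← Finset.add_sum_erase _ F hvAX, ← Finset.add_sum_erase _ F huAX]
        have hcongr3 : ∑ w ∈ ((A.erase X).erase v).erase u, ρ w (g w)
            = ∑ w ∈ ((A.erase X).erase v).erase u, ρ w (f w) := by
          apply Finset.sum_congr rfl
          intro w hw
          rw [hgweq w (Finset.ne_of_mem_erase (Finset.mem_of_mem_erase hw))
            (Finset.ne_of_mem_erase hw)]
        have hval : treeRes ρ ((A.erase X).image fun w => (w, g w)) ≤ treeRes ρ T := by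
          rw [hres₃, hresT, hsplit (fun w => ρ w (g w)), hsplit (fun w => ρ w (f w)),
            hgv, hgu, hρvu, hρut, hcongr3, ← ht_fv, hρvt]
          have h0 : (0:ℝ) ≤ ρ u (f u) := tres_nonneg G r εc u (f u)
          linarith
        have hbadsub : ((A.erase X).image fun w => (w, g w)).filter (badP G)
            ⊆ (T.filter (badP G)).erase p := by
          intro q hq
          obtain ⟨hqmem, hqbad⟩ := Finset.mem_filter.1 hq
          obtain ⟨w, hw, hwq⟩ := Finset.mem_image.1 hqmem
          subst hwq
          have hwAX := Finset.mem_erase.1 hw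
          by_cases h1 : w = v
          · subst h1
            rw [hgv] at hqbad
            exact absurd hqbad.1 hsx
          · by_cases h2 : w = u
            · subst h2
              rw [hgu] at hqbad
              have : t.1 = u.1 := hqbad.1
              rw [ht1] at this
              exact absurd this.symm hsx
            · rw [hgweq w h1 h2] at hqbad ⊢
              refine Finset.mem_erase.2 ⟨?_,
                Finset.mem_filter.2 ⟨hf1 w hwAX.2 hwAX.1, hqbad⟩⟩
              intro h
              apply h1
              have := congrArg Prod.fst h
              exact this
        have hcard₃ : ((((A.erase X).image fun w => (w, g w)).filter (badP G)).card) ≤ n := by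
          have h1 := Finset.card_le_card hbadsub
          have h2 : ((T.filter (badP G)).erase p).card = (T.filter (badP G)).card - 1 :=
            Finset.card_erase_of_mem hpmem
          omega
        exact ih _ hcard₃ hT₃ (le_trans hval hres)
      · exfalso
        apply reroute_absurd
        intro w hw hwX
        have hgu : ∀ i ≤ nu, (Function.update f v u)^[i] u = f^[i] u := by
          intro i hi
          induction i with
          | zero => rfl
          | succ i ihi =>
              rw [Function.iterate_succ_apply', Function.iterate_succ_apply',
                ihi (by omega)]
              apply Function.update_of_ne
              intro h
              exact hpass ⟨i, by omega, h⟩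
        obtain ⟨nw, -, hnwX, -⟩ := reachf w hw hwX
        clear hres hcard
        induction nw using Nat.strong_induction_on generalizing w with
        | _ nw ihw =>
        cases nw with
        | zero => exact absurd hnwX hwX
        | succ nw =>
          by_cases hwv : w = v
          · subst hwv
            refine ⟨nu + 1, ?_⟩
            rw [Function.iterate_add_apply, Function.iterate_one, Function.update_self,
              hgu nu le_rfl, hnuX]
          · have hgw : Function.update f v u w = f w := Function.update_of_ne hwv _ _
            have hfwA : f w ∈ A := (hf4 w hw hwX).1
            have hfw : f^[nw] (f w) = X := by
              rw [← Function.iterate_succ_apply]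
              exact hnwX
            by_cases hfwX : f w = X
            · exact ⟨1, by rw [Function.iterate_one, hgw, hfwX]⟩
            · obtain ⟨m, hm⟩ := ihw nw (Nat.lt_succ_self _) (f w) hfwA hfwX hfw
              exact ⟨m + 1, by rw [Function.iterate_succ_apply, hgw, hm]⟩

end ElimBad

/-! ### The re-rooting surgery along the reversed tree path -/

section Surgery

variable {k : ℕ} (G : SimpleGraph V) (r : ℝ) (εc : V → ℝ) (D : (V × V) → (V × V) → ℝ)

set_option maxHeartbeats 2000000 in
lemma walk_surgery (hr : 0 < r) (hD : IsScheduler D) {Y X : (V → ℤ) × (V × V)}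
    (hYA : Y ∈ Omega V k) (hXA : X ∈ Omega V k) (hYX : Y ≠ X)
    (hYmin : ∀ x' : V → ℤ, IsColoring x' → plusCount x' = k →
      mcount G Y.1 ≤ mcount G x')
    (T : Finset (((V → ℤ) × (V × V)) × ((V → ℤ) × (V × V))))
    (hT : IsTreeRootedAt (Adm D) (Omega V k) T X)
    (hnobad : ∀ p ∈ T, ¬ badP G p) :
    ∃ T', IsTreeRootedAt (Adm D) (Omega V k) T' Y ∧
      treeRes (tres G r εc) T' ≤ treeRes (tres G r εc) T
        + r * ((mcount G Y.1 : ℝ) - (mcount G X.1 : ℝ)) := by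
  classical
  set A := Omega V k with hA
  set ρ := tres G r εc with hρ
  obtain ⟨f, rank, hf1, hf2, hf3, hf4⟩ := tree_out hT Y hYA hYX
  have hresT : treeRes ρ T = ∑ v ∈ A.erase X, ρ v (f v) := by
    rw [hf3]
    exact treeRes_image ρ _ f
  have reachf : ∀ v ∈ A, v ≠ X →
      ∃ n, 0 < n ∧ f^[n] v = X ∧ ∀ i < n, f^[i] v ∈ A ∧ f^[i] v ≠ X :=
    reaches_of_rank (fun v hv hz => ⟨(hf4 v hv hz).1, (hf4 v hv hz).2.2⟩)
  obtain ⟨m, hm0, hmX, hmint⟩ := reachf Y hYA hYX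
  set w : ℕ → (V → ℤ) × (V × V) := fun i => f^[i] Y with hw
  have hw0 : w 0 = Y := rfl
  have hwm : w m = X := hmX
  have hwa : ∀ i < m, w i ∈ A ∧ w i ≠ X := hmint
  have hwaA : ∀ i ≤ m, w i ∈ A := by
    intro i hi
    rcases Nat.lt_or_ge i m with h | h
    · exact (hwa i h).1
    · have : i = m := by omega
      rw [this, hwm]
      exact hXA
  have hstep : ∀ i, f (w i) = w (i + 1) := by
    intro i
    rw [hw]
    exact (Function.iterate_succ_apply' f i Y).symm
  have hedgeT : ∀ i < m, (w i, w (i + 1)) ∈ T := by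
    intro i hi
    rw [← hstep i]
    exact hf1 (w i) (hwa i hi).1 (hwa i hi).2
  have hAdm_w : ∀ i < m, Adm D (w i) (w (i + 1)) := fun i hi => (hT.1 _ (hedgeT i hi)).2.2
  have hinj : ∀ i ≤ m, ∀ j ≤ m, w i = w j → i = j := by
    have key : ∀ i j, i < j → j ≤ m → w i = w j → False := by
      intro i j hij hjm heq
      have h1 : f^[(m - j) + i] Y = f^[(m - j) + j] Y := by
        rw [Function.iterate_add_apply, Function.iterate_add_apply]
        exact congrArg _ heq
      have h2 : (m - j) + j = m := by omega
      rw [h2] at h1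
      exact (hmint ((m - j) + i) (by omega)).2 (h1.trans hmX)
    intro i hi j hj heq
    rcases lt_trichotomy i j with h | h | h
    · exact (key i j h hj heq).elim
    · exact h
    · exact (key j i h hi heq.symm).elim
  -- the reversed walk
  set q : ℕ → (V → ℤ) × (V × V) := fun j =>
    if j = 0 then X else if j ≤ m then ((w (m - j)).1, (w (m - j + 1)).2) else Y
    with hqdef
  have hq0 : q 0 = X := by simp [hqdef]
  have hqmid : ∀ j, 1 ≤ j → j ≤ m → q j = ((w (m - j)).1, (w (m - j + 1)).2) := by
    intro j h1 h2
    simp only [hqdef]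
    rw [if_neg (by omega), if_pos h2]
  have hqlast : q (m + 1) = Y := by
    simp only [hqdef]
    rw [if_neg (by omega), if_neg (by omega)]
  have hYcol : IsColoring Y.1 ∧ plusCount Y.1 = k := mem_Omega_iff.1 hYA
  have hqa : ∀ j ≤ m + 1, q j ∈ A := by
    intro j hj
    rcases Nat.eq_or_lt_of_le hj with h | h
    · rw [h, hqlast]; exact hYA
    · rcases Nat.eq_zero_or_pos j with h0 | h0
      · rw [h0, hq0]; exact hXA
      · rw [hqmid j h0 (by omega)]
        have hwj := mem_Omega_iff.1 (hwaA (m - j) (by omega))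
        exact mem_Omega_iff.2 ⟨hwj.1, hwj.2⟩
  set back : ℕ → ℝ := fun i => resist G r εc ((w (i + 1)).1) ((w (i + 1)).2) ((w i).1)
    with hback
  set fwd : ℕ → ℝ := fun i => ρ (w i) (w (i + 1)) with hfwd
  -- per-edge identity between forward and backward resistances
  have key1 : ∀ i < m, back i = fwd i + (r * ((mcount G (w i).1 : ℝ))
      - r * ((mcount G (w (i+1)).1 : ℝ))) := by
    intro i hi
    have hdisj := (hAdm_w i hi).2
    by_cases hstay : (w (i+1)).1 = (w i).1
    · simp only [hback, hfwd, hρ]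
      show resist G r εc ((w (i + 1)).1) ((w (i + 1)).2) ((w i).1)
        = resist G r εc ((w i).1) ((w (i+1)).2) ((w (i+1)).1) + _
      rw [hstay]
      ring
    · have hswap : (w (i+1)).1 = swap ((w i).1) ((w (i+1)).2).1 ((w (i+1)).2).2 := by
        rcases hdisj with h | h
        · exact absurd h hstay
        · exact h
      have hswapback : swap ((w (i+1)).1) ((w (i+1)).2).1 ((w (i+1)).2).2 = (w i).1 := by
        rw [hswap]
        exact swap_invol _ _ _
      simp only [hback, hfwd, hρ]
      show resist G r εc ((w (i + 1)).1) ((w (i + 1)).2) ((w i).1)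
        = resist G r εc ((w i).1) ((w (i+1)).2) ((w (i+1)).1) + _
      rw [resist_eq, resist_eq, if_neg (fun h => hstay h.symm), if_neg hstay,
        hswapback, ← hswap]
      have habs : ∀ d : ℝ, max 0 (-d) = max 0 d - d := by
        intro d
        rcases le_total 0 d with h | h
        · rw [max_eq_left (by linarith), max_eq_right h]
          ring
        · rw [max_eq_right (by linarith), max_eq_left h]
          ring
      have hneg : r * ((mcount G (w i).1 : ℝ) - (mcount G (w (i+1)).1 : ℝ))
          = -(r * ((mcount G (w (i+1)).1 : ℝ) - (mcount G (w i).1 : ℝ))) := by ring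
      rw [hneg, habs]
      ring
  -- walk step admissibility and costs
  have hqadm : ∀ j ≤ m, Adm D (q j) (q (j + 1)) := by
    intro j hj
    rcases Nat.eq_zero_or_pos j with h0 | h0
    · subst h0
      have hq1 : q 1 = ((w (m - 1)).1, (w (m - 1 + 1)).2) := hqmid 1 le_rfl hm0
      have hm1 : m - 1 + 1 = m := by omega
      rw [hq1, hq0, hm1]
      constructor
      · show 0 < D X.2 (w m).2
        rw [hwm]
        exact hD.2.2.1 X.2
      · show (w (m-1)).1 = X.1 ∨ (w (m-1)).1 = swap X.1 ((w m).2).1 ((w m).2).2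
        have hdisj := (hAdm_w (m-1) (by omega)).2
        rw [hm1] at hdisj
        rw [← hwm]
        rcases hdisj with h | h
        · exact Or.inl h.symm
        · refine Or.inr ?_
          rw [h]
          exact (swap_invol _ _ _).symm
    · rcases Nat.lt_or_ge j m with hjm | hjm
      · -- 1 ≤ j ≤ m - 1
        have hq1 : q j = ((w (m - j)).1, (w (m - j + 1)).2) := hqmid j h0 (by omega)
        have hq2 : q (j+1) = ((w (m - j - 1)).1, (w (m - j - 1 + 1)).2) := by
          have h := hqmid (j+1) (by omega) (by omega)
          rw [show m - (j+1) = m - j - 1 from by omega] at h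
          exact h
        have he1 : m - j - 1 + 1 = m - j := by omega
        rw [hq1, hq2, he1]
        have hadm1 := hAdm_w (m - j - 1) (by omega)
        rw [he1] at hadm1
        have hadm2 := hAdm_w (m - j) (by omega)
        constructor
        · show 0 < D ((w (m - j + 1)).2) ((w (m - j)).2)
          exact (hD.2.2.2.1 _ _).1 hadm2.1
        · show (w (m - j - 1)).1 = (w (m - j)).1
            ∨ (w (m - j - 1)).1 = swap ((w (m - j)).1) (((w (m - j)).2).1) (((w (m - j)).2).2)
          rcases hadm1.2 with h | h
          · exact Or.inl h.symm
          · refine Or.inr ?_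
            rw [h]
            exact (swap_invol _ _ _).symm
      · -- j = m
        have hjm' : j = m := by omega
        rw [hjm']
        have hq1 : q m = ((w 0).1, (w (0 + 1)).2) := by
          have h := hqmid m (by omega) le_rfl
          rw [show m - m = 0 from by omega] at h
          exact h
        have hq2 : q (m + 1) = Y := hqlast
        rw [hq1, hq2]
        constructor
        · show 0 < D ((w (0 + 1)).2) Y.2
          have h := (hAdm_w 0 hm0).1
          rw [hw0] at h
          exact (hD.2.2.2.1 _ _).1 h
        · exact Or.inl (by rw [hw0])
  have hqcost : ∀ j ≤ m, ρ (q j) (q (j + 1)) = if j = m then 0 else back (m - 1 - j) := by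
    intro j hj
    rcases Nat.lt_or_ge j m with hjm | hjm
    · rw [if_neg (by omega)]
      rcases Nat.eq_zero_or_pos j with h0 | h0
      · subst h0
        have hq1 : q 1 = ((w (m - 1)).1, (w (m - 1 + 1)).2) := hqmid 1 le_rfl hm0
        have hm1 : m - 1 + 1 = m := by omega
        rw [hρ, hq0, hq1]
        show resist G r εc X.1 ((w (m - 1 + 1)).2) ((w (m-1)).1) = back (m - 1 - 0)
        rw [hback]
        show _ = resist G r εc ((w (m - 1 - 0 + 1)).1) ((w (m - 1 - 0 + 1)).2) ((w (m - 1 - 0)).1)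
        rw [show m - 1 - 0 = m - 1 from rfl, hm1, hwm]
      · have hq1 : q j = ((w (m - j)).1, (w (m - j + 1)).2) := hqmid j h0 (by omega)
        have hq2 : q (j+1) = ((w (m - j - 1)).1, (w (m - j - 1 + 1)).2) := by
          have h := hqmid (j+1) (by omega) (by omega)
          rw [show m - (j+1) = m - j - 1 from by omega] at h
          exact h
        rw [hρ, hq1, hq2]
        show resist G r εc ((w (m-j)).1) ((w (m - j - 1 + 1)).2) ((w (m - j - 1)).1)
          = back (m - 1 - j)
        rw [hback]
        show _ = resist G r εc ((w (m - 1 - j + 1)).1) ((w (m - 1 - j + 1)).2)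
          ((w (m - 1 - j)).1)
        have e1 : m - j - 1 + 1 = m - j := by omega
        have e2 : m - 1 - j + 1 = m - j := by omega
        have e3 : m - 1 - j = m - j - 1 := by omega
        rw [e1, e2, e3]
    · have hjm' : j = m := by omega
      rw [if_pos hjm', hjm']
      have hq1 : q m = ((w 0).1, (w (0 + 1)).2) := by
        have h := hqmid m (by omega) le_rfl
        rw [show m - m = 0 from by omega] at h
        exact h
      rw [hρ, hq1, hqlast]
      show resist G r εc ((w 0).1) (Y.2) (Y.1) = 0
      rw [hw0, resist_eq, if_pos rfl]
      apply max_eq_left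
      have hswapA : IsColoring (swap Y.1 Y.2.1 Y.2.2) := isColoring_swap hYcol.1 _ _
      have hswapP : plusCount (swap Y.1 Y.2.1 Y.2.2) = k := by
        rw [plusCount_swap]
        exact hYcol.2
      have := hYmin _ hswapA hswapP
      have hcast : (mcount G Y.1 : ℝ) ≤ (mcount G (swap Y.1 Y.2.1 Y.2.2) : ℝ) := by
        exact_mod_cast this
      have hfac : (mcount G Y.1 : ℝ) - (mcount G (swap Y.1 Y.2.1 Y.2.2) : ℝ) ≤ 0 := by
        linarith
      exact mul_nonpos_of_nonneg_of_nonpos hr.le hfac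
  -- sum of the walk costs
  have hsumwalk : ∑ j ∈ Finset.range (m + 1), ρ (q j) (q (j + 1))
      = ∑ i ∈ Finset.range m, back i := by
    rw [Finset.sum_range_succ, hqcost m le_rfl, if_pos rfl, add_zero]
    rw [Finset.sum_congr rfl (fun j hj => by
      rw [hqcost j (le_of_lt (Finset.mem_range.1 hj)), if_neg (by
        have := Finset.mem_range.1 hj
        omega)])]
    exact Finset.sum_range_reflect back m
  have hback_total : ∑ i ∈ Finset.range m, back i
      = (∑ i ∈ Finset.range m, fwd i)
        + (r * ((mcount G Y.1 : ℝ)) - r * ((mcount G X.1 : ℝ))) := by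
    have h1 : ∀ i ∈ Finset.range m, back i
        = fwd i + ((fun i => r * ((mcount G (w i).1 : ℝ))) i
            - (fun i => r * ((mcount G (w i).1 : ℝ))) (i + 1)) :=
      fun i hi => key1 i (Finset.mem_range.1 hi)
    rw [Finset.sum_congr rfl h1, Finset.sum_add_distrib,
      Finset.sum_range_sub' (fun i => r * ((mcount G (w i).1 : ℝ))) m]
    rw [hw0, hwm]
  -- definition of the new out-map
  set P1 : ((V → ℤ) × (V × V)) → Prop := fun v => ∃ j, j ≤ m ∧ q j = v with hP1
  set P2 : ((V → ℤ) × (V × V)) → Prop := fun v => ∃ i, 0 < i ∧ i < m ∧ w i = v with hP2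
  set L : ((V → ℤ) × (V × V)) → ℕ := fun v => Nat.findGreatest (fun j => q j = v) m with hL
  set f' : ((V → ℤ) × (V × V)) → ((V → ℤ) × (V × V)) := fun v =>
    if h1 : P1 v then q (L v + 1)
    else if h2 : P2 v then
      (if mcount G ((w (Nat.find h2 + 1)).1) ≤ mcount G ((w (Nat.find h2)).1)
        then w (Nat.find h2 + 1) else ((w (Nat.find h2)).1, (w (Nat.find h2 + 1)).2))
    else f v
    with hf'
  have hLspec : ∀ v, P1 v → q (L v) = v ∧ L v ≤ m := by
    intro v hv
    obtain ⟨j, hj, hqj⟩ := hv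
    constructor
    · show (fun j' => q j' = v) (L v)
      simp only [hL]
      exact Nat.findGreatest_spec (P := fun j' => q j' = v) hj hqj
    · simp only [hL]
      exact Nat.findGreatest_le m
  have hf'1 : ∀ v, P1 v → f' v = q (L v + 1) := by
    intro v hv
    simp only [hf']
    rw [dif_pos hv]
  have hf'2 : ∀ v (h1 : ¬ P1 v) (h2 : P2 v), f' v =
      (if mcount G ((w (Nat.find h2 + 1)).1) ≤ mcount G ((w (Nat.find h2)).1)
        then w (Nat.find h2 + 1) else ((w (Nat.find h2)).1, (w (Nat.find h2 + 1)).2)) := by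
    intro v h1 h2
    simp only [hf']
    rw [dif_neg h1, dif_pos h2]
  have hf'3 : ∀ v, ¬ P1 v → ¬ P2 v → f' v = f v := by
    intro v h1 h2
    simp only [hf']
    rw [dif_neg h1, dif_neg h2]
  -- reachability of Y under the new map
  have reachq : ∀ dd j, j ≤ m + 1 → m + 1 - j ≤ dd → ∃ nn, f'^[nn] (q j) = Y := by
    intro dd
    induction dd with
    | zero =>
        intro j hj hd
        have hj1 : j = m + 1 := by omega
        exact ⟨0, by rw [Function.iterate_zero_apply, hj1, hqlast]⟩
    | succ dd ih =>
        intro j hj hd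
        by_cases hjY : q j = Y
        · exact ⟨0, by rw [Function.iterate_zero_apply, hjY]⟩
        · have hjm : j ≤ m := by
            rcases Nat.eq_or_lt_of_le hj with h | h
            · exact absurd (by rw [h, hqlast]) hjY
            · omega
          have hP1qj : P1 (q j) := ⟨j, hjm, rfl⟩
          have hLj := hLspec (q j) hP1qj
          have hLgej : j ≤ L (q j) := by
            simp only [hL]
            exact Nat.le_findGreatest hjm rfl
          obtain ⟨nn, hnn⟩ := ih (L (q j) + 1) (by omega) (by omega)
          exact ⟨nn + 1, by rw [Function.iterate_succ_apply, hf'1 _ hP1qj, hnn]⟩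
  have reachP1 : ∀ v, P1 v → ∃ nn, f'^[nn] v = Y := by
    intro v hv
    obtain ⟨j, hj, hqj⟩ := hv
    rw [← hqj]
    exact reachq (m + 1 - j) j (by omega) le_rfl
  have reachw : ∀ dd i, 0 < i → i ≤ m → m - i ≤ dd → ∃ nn, f'^[nn] (w i) = Y := by
    intro dd
    induction dd with
    | zero =>
        intro i h0 hi hd
        have him : i = m := by omega
        exact reachP1 _ ⟨0, by omega, by rw [hq0, him, hwm]⟩
    | succ dd ih =>
        intro i h0 hi hd
        by_cases hb1 : P1 (w i)
        · exact reachP1 _ hb1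
        · rcases Nat.eq_or_lt_of_le hi with him | him
          · exact (hb1 ⟨0, by omega, by rw [hq0, him, hwm]⟩).elim
          · have hb2 : P2 (w i) := ⟨i, h0, him, rfl⟩
            obtain ⟨hff0, hffm, hffeq⟩ := Nat.find_spec hb2
            have hieq : Nat.find hb2 = i := hinj _ (by omega) i (by omega) hffeq
            have htgt : ∃ nn, f'^[nn] (f' (w i)) = Y := by
              rw [hf'2 _ hb1 hb2, hieq]
              by_cases hle : mcount G ((w (i + 1)).1) ≤ mcount G ((w i).1)
              · rw [if_pos hle]
                exact ih (i + 1) (by omega) (by omega) (by omega)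
              · rw [if_neg hle]
                apply reachP1
                refine ⟨m - i, by omega, ?_⟩
                rw [hqmid (m - i) (by omega) (by omega),
                  show m - (m - i) = i from by omega]
            obtain ⟨nn, hnn⟩ := htgt
            exact ⟨nn + 1, by rw [Function.iterate_succ_apply, hnn]⟩
  have reach_aux : ∀ nv (v : (V → ℤ) × (V × V)), v ∈ A → v ≠ X → f^[nv] v = X →
      ∃ nn, f'^[nn] v = Y := by
    intro nv
    induction nv using Nat.strong_induction_on with
    | _ nv ihv =>
    intro v hv hvX hnvX
    by_cases hb1 : P1 v
    · exact reachP1 v hb1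
    by_cases hb2 : P2 v
    · obtain ⟨i, h0, him, heq⟩ := hb2
      rw [← heq]
      exact reachw (m - i) i h0 (by omega) le_rfl
    · have hfv : f' v = f v := hf'3 v hb1 hb2
      cases nv with
      | zero => exact absurd hnvX hvX
      | succ nv =>
        have hfvA : f v ∈ A := (hf4 v hv hvX).1
        have hnext : f^[nv] (f v) = X := by
          rw [← Function.iterate_succ_apply]
          exact hnvX
        by_cases hfvX : f v = X
        · obtain ⟨nn, hnn⟩ : ∃ nn, f'^[nn] (f v) = Y := by
            rw [hfvX]
            exact reachP1 _ ⟨0, by omega, hq0⟩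
          exact ⟨nn + 1, by rw [Function.iterate_succ_apply, hfv, hnn]⟩
        · obtain ⟨nn, hnn⟩ := ihv nv (by omega) (f v) hfvA hfvX hnext
          exact ⟨nn + 1, by rw [Function.iterate_succ_apply, hfv, hnn]⟩
  have H2 : ∀ v ∈ A, v ≠ Y → ∃ nn, f'^[nn] v = Y := by
    intro v hv hvY
    by_cases hvX : v = X
    · rw [hvX]
      exact reachP1 _ ⟨0, by omega, hq0⟩
    · obtain ⟨nv, -, h1, -⟩ := reachf v hv hvX
      exact reach_aux nv v hv hvX h1
  have H1 : ∀ v ∈ A, v ≠ Y → f' v ∈ A ∧ Adm D v (f' v) := by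
    intro v hv hvY
    by_cases hb1 : P1 v
    · obtain ⟨hqL, hLm⟩ := hLspec v hb1
      rw [hf'1 v hb1]
      refine ⟨hqa (L v + 1) (by omega), ?_⟩
      have h := hqadm (L v) hLm
      rwa [hqL] at h
    · by_cases hb2 : P2 v
      · obtain ⟨hff0, hffm, hffeq⟩ := Nat.find_spec hb2
        rw [hf'2 v hb1 hb2]
        set i0 := Nat.find hb2 with hi0
        rw [← hffeq]
        by_cases hle : mcount G ((w (i0 + 1)).1) ≤ mcount G ((w i0).1)
        · rw [if_pos hle]
          exact ⟨hwaA (i0 + 1) (by omega), hAdm_w i0 hffm⟩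
        · rw [if_neg hle]
          constructor
          · have hwj := mem_Omega_iff.1 (hwaA i0 (by omega))
            exact mem_Omega_iff.2 ⟨hwj.1, hwj.2⟩
          · exact ⟨(hAdm_w i0 hffm).1, Or.inl rfl⟩
      · rw [hf'3 v hb1 hb2]
        have hvX : v ≠ X := fun h => hb1 ⟨0, by omega, by rw [hq0, h]⟩
        exact ⟨(hf4 v hv hvX).1, (hf4 v hv hvX).2.1⟩
  have hT' := build_tree (Ad := Adm D) (A := A) (z := Y) f' H1 H2
  have hres' : treeRes ρ ((A.erase Y).image fun v => (v, f' v))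
      = ∑ v ∈ A.erase Y, ρ v (f' v) := treeRes_image ρ _ f'
  -- the three classes of sources
  set S1 := (A.erase Y).filter P1 with hS1def
  set S23 := (A.erase Y).filter (fun v => ¬ P1 v) with hS23def
  set S2 := S23.filter P2 with hS2def
  set S3 := S23.filter (fun v => ¬ P2 v) with hS3def
  have hsplit1 : ∑ v ∈ A.erase Y, ρ v (f' v)
      = ∑ v ∈ S1, ρ v (f' v) + ∑ v ∈ S23, ρ v (f' v) :=
    (Finset.sum_filter_add_sum_filter_not _ _ _).symm
  have hsplit2 : ∑ v ∈ S23, ρ v (f' v)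
      = ∑ v ∈ S2, ρ v (f' v) + ∑ v ∈ S3, ρ v (f' v) :=
    (Finset.sum_filter_add_sum_filter_not _ _ _).symm
  have hS1bound : ∑ v ∈ S1, ρ v (f' v)
      ≤ ∑ j ∈ Finset.range (m + 1), ρ (q j) (q (j + 1)) := by
    have hstep1 : ∀ v ∈ S1, ρ v (f' v) = ρ (q (L v)) (q (L v + 1)) := by
      intro v hvS
      have hb1 : P1 v := (Finset.mem_filter.1 hvS).2
      rw [hf'1 v hb1, (hLspec v hb1).1]
    rw [Finset.sum_congr rfl hstep1]
    have hLinj : ∀ v1 ∈ S1, ∀ v2 ∈ S1, L v1 = L v2 → v1 = v2 := by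
      intro v1 hv1 v2 hv2 h
      have e1 := (hLspec v1 (Finset.mem_filter.1 hv1).2).1
      have e2 := (hLspec v2 (Finset.mem_filter.1 hv2).2).1
      rw [← e1, ← e2, h]
    calc ∑ v ∈ S1, ρ (q (L v)) (q (L v + 1))
        = ∑ j ∈ S1.image L, ρ (q j) (q (j + 1)) := by rw [Finset.sum_image hLinj]
      _ ≤ ∑ j ∈ Finset.range (m + 1), ρ (q j) (q (j + 1)) := by
          apply Finset.sum_le_sum_of_subset_of_nonneg
          · intro j hj
            obtain ⟨v, hvS, hLv⟩ := Finset.mem_image.1 hj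
            have h2 := (hLspec v (Finset.mem_filter.1 hvS).2).2
            rw [Finset.mem_range]
            omega
          · intro j _ _
            exact tres_nonneg G r εc _ _
  have hS2zero : ∀ v ∈ S2, ρ v (f' v) = 0 := by
    intro v hvS
    have hv23 := Finset.mem_filter.1 hvS
    have hb2 : P2 v := hv23.2
    have hb1 : ¬ P1 v := (Finset.mem_filter.1 hv23.1).2
    obtain ⟨hff0, hffm, hffeq⟩ := Nat.find_spec hb2
    rw [hf'2 v hb1 hb2]
    set i0 := Nat.find hb2 with hi0
    rw [← hffeq]
    have hdisj := (hAdm_w i0 hffm).2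
    by_cases hle : mcount G ((w (i0 + 1)).1) ≤ mcount G ((w i0).1)
    · rw [if_pos hle]
      show resist G r εc ((w (i0)).1) ((w (i0 + 1)).2)
        ((w (i0 + 1)).1) = 0
      by_cases hstay : (w (i0 + 1)).1 = (w (i0)).1
      · rw [resist_eq, if_pos hstay]
        apply max_eq_left
        have hnb' : ¬ ((w (i0 + 1)).1 = (w i0).1 ∧
            mcount G (swap ((w i0).1) (((w (i0 + 1)).2).1) (((w (i0 + 1)).2).2))
              < mcount G ((w i0).1)) := hnobad _ (hedgeT i0 hffm)
        have hge : mcount G ((w (i0)).1) ≤ mcount G (swap ((w (i0)).1)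
            (((w (i0 + 1)).2).1) (((w (i0 + 1)).2).2)) := by
          by_contra hlt
          exact hnb' ⟨hstay, by omega⟩
        have hc1 : (mcount G ((w (i0)).1) : ℝ)
            ≤ (mcount G (swap ((w (i0)).1)
              (((w (i0 + 1)).2).1) (((w (i0 + 1)).2).2)) : ℝ) := by
          exact_mod_cast hge
        exact mul_nonpos_of_nonneg_of_nonpos hr.le (by linarith)
      · have hswap : (w (i0 + 1)).1 = swap ((w (i0)).1)
            (((w (i0 + 1)).2).1) (((w (i0 + 1)).2).2) := by
          rcases hdisj with h | h
          · exact absurd h hstay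
          · exact h
        rw [resist_eq, if_neg hstay, ← hswap]
        apply max_eq_left
        have hc1 : (mcount G ((w (i0 + 1)).1) : ℝ)
            ≤ (mcount G ((w (i0)).1) : ℝ) := by exact_mod_cast hle
        exact mul_nonpos_of_nonneg_of_nonpos hr.le (by linarith)
    · rw [if_neg hle]
      show resist G r εc ((w (i0)).1) ((w (i0 + 1)).2)
        ((w (i0)).1) = 0
      have hswap : (w (i0 + 1)).1 = swap ((w (i0)).1)
          (((w (i0 + 1)).2).1) (((w (i0 + 1)).2).2) := by
        rcases hdisj with h | h
        · exact absurd (le_of_eq (by rw [h])) hle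
        · exact h
      rw [resist_eq, if_pos rfl, ← hswap]
      apply max_eq_left
      have hc1 : (mcount G ((w (i0)).1) : ℝ)
          ≤ (mcount G ((w (i0 + 1)).1) : ℝ) := by
        have : mcount G ((w (i0)).1) ≤ mcount G ((w (i0 + 1)).1) := by
          omega
        exact_mod_cast this
      exact mul_nonpos_of_nonneg_of_nonpos hr.le (by linarith)
  have hS3eq : ∀ v ∈ S3, ρ v (f' v) = ρ v (f v) := by
    intro v hvS
    have h3 := Finset.mem_filter.1 hvS
    have hb2 : ¬ P2 v := h3.2
    have hb1 : ¬ P1 v := (Finset.mem_filter.1 h3.1).2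
    rw [hf'3 v hb1 hb2]
  -- lower bound for the resistance of T
  set FwdSrc := (Finset.range m).image w with hFwdSrcDef
  have hdisjFS : Disjoint FwdSrc S3 := by
    rw [Finset.disjoint_left]
    intro v hvF hvS
    obtain ⟨i, hi, hwi⟩ := Finset.mem_image.1 hvF
    rw [Finset.mem_range] at hi
    have h3 := Finset.mem_filter.1 hvS
    have h23 := Finset.mem_filter.1 h3.1
    have hvY : v ≠ Y := (Finset.mem_erase.1 h23.1).1
    rcases Nat.eq_zero_or_pos i with h0 | h0
    · apply hvY
      rw [← hwi, h0, hw0]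
    · exact h3.2 ⟨i, h0, hi, hwi⟩
  have hsubFS : FwdSrc ∪ S3 ⊆ A.erase X := by
    intro v hv
    rcases Finset.mem_union.1 hv with h | h
    · obtain ⟨i, hi, hwi⟩ := Finset.mem_image.1 h
      rw [Finset.mem_range] at hi
      rw [← hwi]
      exact Finset.mem_erase.2 ⟨(hwa i hi).2, (hwa i hi).1⟩
    · have h3 := Finset.mem_filter.1 h
      have h23 := Finset.mem_filter.1 h3.1
      have hb1 : ¬ P1 v := h23.2
      have hvX : v ≠ X := fun he => hb1 ⟨0, by omega, by rw [hq0, he]⟩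
      exact Finset.mem_erase.2 ⟨hvX, (Finset.mem_erase.1 h23.1).2⟩
  have hlow : ∑ v ∈ FwdSrc, ρ v (f v) + ∑ v ∈ S3, ρ v (f v) ≤ treeRes ρ T := by
    rw [hresT, ← Finset.sum_union hdisjFS]
    exact Finset.sum_le_sum_of_subset_of_nonneg hsubFS (fun v _ _ => tres_nonneg G r εc _ _)
  have hFwdSum : ∑ v ∈ FwdSrc, ρ v (f v) = ∑ i ∈ Finset.range m, fwd i := by
    rw [hFwdSrcDef, Finset.sum_image (fun i hi j hj h =>
      hinj i (le_of_lt (Finset.mem_range.1 hi)) j (le_of_lt (Finset.mem_range.1 hj)) h)]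
    apply Finset.sum_congr rfl
    intro i hi
    rw [hstep i]
  -- final bound
  refine ⟨(A.erase Y).image fun v => (v, f' v), hT', ?_⟩
  rw [hres']
  calc ∑ v ∈ A.erase Y, ρ v (f' v)
      = ∑ v ∈ S1, ρ v (f' v) + (∑ v ∈ S2, ρ v (f' v) + ∑ v ∈ S3, ρ v (f' v)) := by
        rw [hsplit1, hsplit2]
    _ = ∑ v ∈ S1, ρ v (f' v) + ∑ v ∈ S3, ρ v (f v) := by
        rw [Finset.sum_eq_zero hS2zero, Finset.sum_congr rfl hS3eq, zero_add]
    _ ≤ (∑ j ∈ Finset.range (m + 1), ρ (q j) (q (j + 1))) + ∑ v ∈ S3, ρ v (f v) := by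
        linarith [hS1bound]
    _ = (∑ i ∈ Finset.range m, back i) + ∑ v ∈ S3, ρ v (f v) := by rw [hsumwalk]
    _ = ((∑ i ∈ Finset.range m, fwd i) + ∑ v ∈ S3, ρ v (f v))
        + (r * ((mcount G Y.1 : ℝ)) - r * ((mcount G X.1 : ℝ))) := by
        rw [hback_total]
        ring
    _ ≤ treeRes ρ T + r * ((mcount G Y.1 : ℝ) - (mcount G X.1 : ℝ)) := by
        rw [← hFwdSum]
        have := hlow
        nlinarith [hlow]

end Surgery

/-- **Tree replacement lemma.** Let `Y ∈ Ω_k` have a maximally segregated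
coloring, let `X ∈ Ω_k` be any state, and let `T` be a tree rooted at `X` (within `Ω_k`)
of minimal resistance among trees rooted at `X`. Then some tree rooted at `Y` has
resistance at most that of `T`, strictly less if the coloring of `X` is not maximally
segregated. -/
theorem tree_replacement
    (N : ℕ) [NeZero N] (hN : 2 ≤ N) (r : ℝ) (hr : 0 < r)
    (εc : ZMod N × ZMod N → ℝ)
    (D : ((ZMod N × ZMod N) × (ZMod N × ZMod N)) →
         ((ZMod N × ZMod N) × (ZMod N × ZMod N)) → ℝ)
    (hD : IsScheduler D)
    (k : ℕ) (hk : k ≤ N ^ 2)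
    (Y X : ((ZMod N × ZMod N) → ℤ) × ((ZMod N × ZMod N) × (ZMod N × ZMod N)))
    (hY : Y ∈ Omega (ZMod N × ZMod N) k) (hX : X ∈ Omega (ZMod N × ZMod N) k)
    (hYseg : MaximallySegregated (torus N) Y.1)
    (T : Finset ((((ZMod N × ZMod N) → ℤ) × ((ZMod N × ZMod N) × (ZMod N × ZMod N))) ×
                 (((ZMod N × ZMod N) → ℤ) × ((ZMod N × ZMod N) × (ZMod N × ZMod N)))))
    (hT : IsTreeRootedAt (Adm D) (Omega (ZMod N × ZMod N) k) T X)
    (hTmin : ∀ T', IsTreeRootedAt (Adm D) (Omega (ZMod N × ZMod N) k) T' X →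
      treeRes (tres (torus N) r εc) T ≤ treeRes (tres (torus N) r εc) T') :
    ∃ T', IsTreeRootedAt (Adm D) (Omega (ZMod N × ZMod N) k) T' Y ∧
      treeRes (tres (torus N) r εc) T' ≤ treeRes (tres (torus N) r εc) T ∧
      (¬ MaximallySegregated (torus N) X.1 →
        treeRes (tres (torus N) r εc) T' < treeRes (tres (torus N) r εc) T) := by
  classical
  by_cases hYX : Y = X
  · refine ⟨T, by rwa [hYX], le_refl _, ?_⟩
    intro hnot
    exact absurd (by rw [← hYX]; exact hYseg) hnot
  · have hYcol := mem_Omega_iff.1 hY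
    have hXcol := mem_Omega_iff.1 hX
    have hYmin : ∀ x' : ZMod N × ZMod N → ℤ, IsColoring x' → plusCount x' = k →
        mcount (torus N) Y.1 ≤ mcount (torus N) x' := by
      intro x' h1 h2
      have h3 := hYseg x' h1 (by rw [h2, hYcol.2])
      rw [mcount_eq_twice_bichrom, mcount_eq_twice_bichrom]
      omega
    obtain ⟨T₀, hT₀, hres₀, hnobad₀⟩ := elim_bad (torus N) r εc D hr hD hX hY hYX
      (treeRes (tres (torus N) r εc) T) hTmin ((T.filter (badP (torus N))).card) T
      le_rfl hT le_rfl
    obtain ⟨T', hT', hresle⟩ := walk_surgery (torus N) r εc D hr hD hY hX hYX hYmin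
      T₀ hT₀ hnobad₀
    have hMYX : mcount (torus N) Y.1 ≤ mcount (torus N) X.1 := hYmin X.1 hXcol.1 hXcol.2
    have hMYXr : ((mcount (torus N) Y.1 : ℝ)) ≤ (mcount (torus N) X.1 : ℝ) := by
      exact_mod_cast hMYX
    have hfac : r * ((mcount (torus N) Y.1 : ℝ) - (mcount (torus N) X.1 : ℝ)) ≤ 0 :=
      mul_nonpos_of_nonneg_of_nonpos hr.le (by linarith)
    refine ⟨T', hT', by linarith, ?_⟩
    intro hnot
    rw [MaximallySegregated] at hnot
    push_neg at hnot
    obtain ⟨x', h1, h2, h3⟩ := hnot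
    have h4 : bichromCount (torus N) Y.1 ≤ bichromCount (torus N) x' :=
      hYseg x' h1 (by rw [h2, hXcol.2, hYcol.2])
    have h5 : mcount (torus N) Y.1 < mcount (torus N) X.1 := by
      rw [mcount_eq_twice_bichrom, mcount_eq_twice_bichrom]
      omega
    have h6 : ((mcount (torus N) Y.1 : ℝ)) < (mcount (torus N) X.1 : ℝ) := by
      exact_mod_cast h5
    have h7 : r * ((mcount (torus N) Y.1 : ℝ) - (mcount (torus N) X.1 : ℝ)) < 0 :=
      mul_neg_of_pos_of_neg hr (by linarith)
    linarith

end Schelling
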